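/- arXiv:1011.5045 — 2 statements merged into one kernel-verified Lean document; each statement's English description precedes it below -/
import Mathlib

section
/- If λ and λ' are partitions of n with λ ⪯ λ', then λ ≤ λ' in the dominance order; that is, the criterion ⪯ (characterizing inclusion of sheet closures in sl_n) implies the dominance criterion (characterizing inclusion of nilpotent orbit closures). -/
open Finset

/-- The `i`-th part (for `1 ≤ i`) of the dual partition `λ̃` of a partition `λ`:
`λ̃ᵢ = #{j : λⱼ ≥ i}`. -/
def dualPart {n : ℕ} (P : n.Partition) (i : ℕ) : ℕ :=
  (P.parts.filter (fun a => i ≤ a)).card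

/-- The number of parts of the dual partition, i.e. the largest part `λ₁` of `λ`. -/
def numDualParts {n : ℕ} (P : n.Partition) : ℕ :=
  P.parts.sup

/-- `Prec P Q` (written `λ ⪯ λ'` in the paper): there is a partition `(Jᵢ)` of the
index set `{1, …, p'}` of the dual partition of `λ'` into pairwise disjoint
nonempty subsets, indexed by the index set `{1, …, p}` of the dual partition of
`λ`, such that `λ̃ᵢ = ∑_{j ∈ Jᵢ} λ̃'ⱼ` for all `i`. -/
def Prec {n m : ℕ} (P : n.Partition) (Q : m.Partition) : Prop :=
  ∃ J : Fin (numDualParts P) → Finset (Fin (numDualParts Q)),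
    (∀ i i', i ≠ i' → Disjoint (J i) (J i')) ∧
    (∀ i, (J i).Nonempty) ∧
    (∀ j, ∃ i, j ∈ J i) ∧
    ∀ i, dualPart P (i.val + 1) = ∑ j ∈ J i, dualPart Q (j.val + 1)

/-- The sum of the `m` largest parts of a partition. -/
def topSum {n : ℕ} (P : n.Partition) (m : ℕ) : ℕ :=
  ((P.parts.sort (· ≥ ·)).take m).sum

/-- The dominance order: `λ ≤ λ'` iff for every `m`,
`λ₁ + ⋯ + λₘ ≤ λ'₁ + ⋯ + λ'ₘ`. -/
def DomLE {n : ℕ} (P Q : n.Partition) : Prop :=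
  ∀ m : ℕ, topSum P m ≤ topSum Q m



lemma indicator_sum (a K : ℕ) : ∑ c ∈ Finset.range K, (if c + 1 ≤ a then 1 else 0) = min a K := by
  induction K with
  | zero => simp
  | succ K ih => rw [Finset.sum_range_succ, ih]; split <;> omega

lemma sum_eq_sum_countP (l : List ℕ) (K : ℕ) (h : ∀ a ∈ l, a ≤ K) :
    l.sum = ∑ c ∈ Finset.range K, (l.countP (fun a => c + 1 ≤ a)) := by
  induction l with
  | nil => simp
  | cons a l ih =>
    simp only [List.sum_cons, List.countP_cons]
    rw [ih (fun b hb => h b (List.mem_cons_of_mem _ hb)), Finset.sum_add_distrib]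
    have : ∑ c ∈ Finset.range K, (if (decide (c + 1 ≤ a)) = true then 1 else 0) = a := by
      simp only [decide_eq_true_eq]
      rw [indicator_sum]
      exact min_eq_left (h a (List.mem_cons_self))
    omega

lemma countP_take (L : List ℕ) (hs : L.Pairwise (· ≥ ·)) (m c : ℕ) :
    (L.take m).countP (fun a => c ≤ a) = min (L.countP (fun a => c ≤ a)) m := by
  induction L generalizing m with
  | nil => simp
  | cons a L ih =>
    rw [List.pairwise_cons] at hs
    cases m with
    | zero => simp
    | succ m =>
      simp only [List.take_succ_cons, List.countP_cons]
      by_cases hca : c ≤ a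
      · simp only [hca, decide_eq_true_eq, if_pos]
        rw [ih hs.2 m]
        omega
      · have h0 : L.countP (fun a => decide (c ≤ a)) = 0 := by
          rw [List.countP_eq_zero]
          intro b hb
          have := hs.1 b hb
          simp only [decide_eq_true_eq]
          omega
        have h1 : (L.take m).countP (fun a => decide (c ≤ a)) = 0 := by
          rw [List.countP_eq_zero]
          intro b hb
          have := hs.1 b (List.mem_of_mem_take hb)
          simp only [decide_eq_true_eq]
          omega
        simp [hca, h0, h1]

lemma topSum_eq {n : ℕ} (P : n.Partition) (m : ℕ) :
    topSum P m = ∑ c ∈ Finset.range (numDualParts P), min (dualPart P (c + 1)) m := by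
  set L := P.parts.sort (· ≥ ·) with hL
  have hsort : L.Pairwise (· ≥ ·) := P.parts.pairwise_sort _
  have hmem : ∀ a ∈ L, a ≤ numDualParts P := by
    intro a ha
    exact Multiset.le_sup ((Multiset.mem_sort _).mp ha)
  have hd : ∀ c, dualPart P c = L.countP (fun a => c ≤ a) := by
    intro c
    unfold dualPart
    conv_lhs => rw [← Multiset.sort_eq P.parts (· ≥ ·)]
    rw [← Multiset.countP_eq_card_filter, Multiset.coe_countP]
  unfold topSum
  rw [sum_eq_sum_countP _ (numDualParts P)
      (fun a ha => hmem a (List.mem_of_mem_take ha))]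
  refine Finset.sum_congr rfl fun c _ => ?_
  rw [hd, countP_take L hsort]

lemma min_sum_le {α : Type*} (s : Finset α) (f : α → ℕ) (m : ℕ) :
    min (∑ j ∈ s, f j) m ≤ ∑ j ∈ s, min (f j) m := by
  induction s using Finset.cons_induction with
  | empty => simp
  | cons a s ha ih =>
    rw [Finset.sum_cons, Finset.sum_cons]
    have : min (f a + ∑ j ∈ s, f j) m ≤ min (f a) m + min (∑ j ∈ s, f j) m := by omega
    omega

lemma topSum_eq' {n : ℕ} (P : n.Partition) (m : ℕ) :
    topSum P m = ∑ i : Fin (numDualParts P), min (dualPart P (i.val + 1)) m := by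
  rw [topSum_eq, ← Fin.sum_univ_eq_sum_range (fun c => min (dualPart P (c + 1)) m)]

theorem prec_implies_domLE' {n : ℕ} (P Q : n.Partition)
    (h : Prec P Q) : DomLE P Q := by
  intro m
  obtain ⟨J, hdisj, hne, hcover, hsum⟩ := h
  rw [topSum_eq' P m, topSum_eq' Q m]
  have hbi : (Finset.univ : Finset (Fin (numDualParts P))).biUnion J = Finset.univ := by
    apply Finset.eq_univ_iff_forall.mpr
    intro j
    obtain ⟨i, hi⟩ := hcover j
    exact Finset.mem_biUnion.mpr ⟨i, Finset.mem_univ i, hi⟩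
  calc ∑ i : Fin (numDualParts P), min (dualPart P (i.val + 1)) m
      = ∑ i : Fin (numDualParts P), min (∑ j ∈ J i, dualPart Q (j.val + 1)) m := by
        refine Finset.sum_congr rfl fun i _ => ?_
        rw [hsum i]
    _ ≤ ∑ i : Fin (numDualParts P), ∑ j ∈ J i, min (dualPart Q (j.val + 1)) m :=
        Finset.sum_le_sum fun i _ => min_sum_le _ _ _
    _ = ∑ j ∈ Finset.univ.biUnion J, min (dualPart Q (j.val + 1)) m := by
        refine (Finset.sum_biUnion ?_).symm
        intro i _ i' _ hii
        exact hdisj i i' hii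
    _ = ∑ j : Fin (numDualParts Q), min (dualPart Q (j.val + 1)) m := by rw [hbi]

/-- The criterion `⪯` (characterizing inclusion of sheet closures in `sl n`)
implies the dominance criterion (characterizing inclusion of nilpotent orbit
closures): if `λ ⪯ λ'` then `λ ≤ λ'` in the dominance order. -/
theorem prec_implies_domLE {n : ℕ} (P Q : n.Partition)
    (h : Prec P Q) : DomLE P Q := by
  exact prec_implies_domLE' P Q h
end

section
/- The relation ⪯ is strictly stronger than the dominance order: there exist partitions λ and λ' of the same integer n such that λ ≤ λ' in the dominance order but λ ⪯ λ' fails. -/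
open Finset

def P4 : Nat.Partition 4 := ⟨{2,1,1}, by decide, by decide⟩
def Q4 : Nat.Partition 4 := ⟨{2,2}, by decide, by decide⟩

/-- The relation `⪯` is strictly stronger than the dominance order: there exist
partitions `λ`, `λ'` of the same integer `n` with `λ ≤ λ'` in the dominance
order but not `λ ⪯ λ'`. -/
theorem exists_domLE_not_prec :
    ∃ (n : ℕ) (P Q : n.Partition), DomLE P Q ∧ ¬ Prec P Q := by
  refine ⟨4, P4, Q4, ?_, ?_⟩
  · have hP : P4.parts.sort (· ≥ ·) = [2,1,1] := by
      apply List.Perm.eq_of_pairwise' (Multiset.pairwise_sort _ _) (by decide) ?_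
      rw [← Multiset.coe_eq_coe, Multiset.sort_eq]; rfl
    have hQ : Q4.parts.sort (· ≥ ·) = [2,2] := by
      apply List.Perm.eq_of_pairwise' (Multiset.pairwise_sort _ _) (by decide) ?_
      rw [← Multiset.coe_eq_coe, Multiset.sort_eq]; rfl
    intro m
    simp only [topSum, hP, hQ]
    match m with
    | 0 => simp
    | 1 => simp
    | 2 => simp
    | (k+3) => simp [List.take_of_length_le]
  · rintro ⟨J, hdisj, hne, hcov, hsum⟩
    have hlt : 1 < numDualParts P4 := by decide
    set i1 : Fin (numDualParts P4) := ⟨1, hlt⟩ with hi1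
    have h1 := hsum i1
    have hlhs : dualPart P4 (i1.val + 1) = 1 := by
      show dualPart P4 (1 + 1) = 1
      decide
    rw [hlhs] at h1
    have hval : ∀ j : Fin (numDualParts Q4), dualPart Q4 (j.val + 1) = 2 := by decide
    obtain ⟨j, hj⟩ := hne i1
    have h2 : 2 ≤ ∑ j ∈ J i1, dualPart Q4 (j.val + 1) := by
      calc 2 = dualPart Q4 (j.val + 1) := (hval j).symm
        _ ≤ ∑ j ∈ J i1, dualPart Q4 (j.val + 1) :=
          Finset.single_le_sum (f := fun j => dualPart Q4 (j.val + 1))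
            (fun _ _ => Nat.zero_le _) hj
    omega
end
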